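/- Let V be a finite set, h a binary preference function on V, σ* a ranking of V, and ω an admissible weight function (symmetric, monotone, triangle inequality). Then the expected weighted misranking loss of the QuickSort output satisfies E_s[L_ω(QuickSort_s(V,h), σ*)] ≤ 2·L_ω(h, σ*), where L_ω(σ,σ*) = C(n,2)⁻¹ Σ_{u≠v} σ(u,v)σ*(v,u)ω(σ*(u),σ*(v)) and L_ω(h,σ*) is defined analogously with h(u,v) in place of σ(u,v). -/

import Mathlib

variable {V : Type*} [DecidableEq V]

/-- QuickSort on a list using a (possibly non-transitive) preference function:
the head is the pivot, elements preferred to the pivot go left.  Running it on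
a uniformly random permutation of the input is equivalent to uniformly random
pivot selection. -/
def qsort (h : V → V → Bool) : List V → List V
  | [] => []
  | x :: xs =>
      qsort h (xs.filter (fun y => h y x)) ++ x :: qsort h (xs.filter (fun y => !(h y x)))
  termination_by l => l.length
  decreasing_by
    · simp only [List.length_cons]; exact Nat.lt_succ_of_le (by first | exact (List.length_unattach).le.trans ((List.length_filter_le _ _).trans (List.length_attach).le) | simp [List.length_filter_le] | exact (List.length_filter_le _ _).trans (by simp))
    · simp only [List.length_cons]; exact Nat.lt_succ_of_le (by first | exact (List.length_unattach).le.trans ((List.length_filter_le _ _).trans (List.length_attach).le) | simp [List.length_filter_le] | exact (List.length_filter_le _ _).trans (by simp))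

/-- The unordered pairs compared directly (pivot vs. element of its call). -/
def directPairs (h : V → V → Bool) : List V → List (Finset V)
  | [] => []
  | x :: xs =>
      xs.map (fun y => ({x, y} : Finset V)) ++
      (directPairs h (xs.filter (fun y => h y x)) ++
        directPairs h (xs.filter (fun y => !(h y x))))
  termination_by l => l.length
  decreasing_by
    · simp only [List.length_cons]; exact Nat.lt_succ_of_le (by first | exact (List.length_unattach).le.trans ((List.length_filter_le _ _).trans (List.length_attach).le) | simp [List.length_filter_le] | exact (List.length_filter_le _ _).trans (by simp))
    · simp only [List.length_cons]; exact Nat.lt_succ_of_le (by first | exact (List.length_unattach).le.trans ((List.length_filter_le _ _).trans (List.length_attach).le) | simp [List.length_filter_le] | exact (List.length_filter_le _ _).trans (by simp))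

/-- The unordered triples present together in a recursive call whose pivot is
one of them. -/
def pivotTriples (h : V → V → Bool) : List V → List (Finset V)
  | [] => []
  | x :: xs =>
      (xs.product xs).map (fun p => ({x, p.1, p.2} : Finset V)) ++
      (pivotTriples h (xs.filter (fun y => h y x)) ++
        pivotTriples h (xs.filter (fun y => !(h y x))))
  termination_by l => l.length
  decreasing_by
    · simp only [List.length_cons]; exact Nat.lt_succ_of_le (by first | exact (List.length_unattach).le.trans ((List.length_filter_le _ _).trans (List.length_attach).le) | simp [List.length_filter_le] | exact (List.length_filter_le _ _).trans (by simp))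
    · simp only [List.length_cons]; exact Nat.lt_succ_of_le (by first | exact (List.length_unattach).le.trans ((List.length_filter_le _ _).trans (List.length_attach).le) | simp [List.length_filter_le] | exact (List.length_filter_le _ _).trans (by simp))

/-- Expectation of `f` of the input list over a uniformly random ordering of
`V` (equivalently, over the random bits of QuickSort's pivot choices). -/
noncomputable def qsExp [Fintype V] (f : List V → ℝ) : ℝ :=
  (((Finset.univ : Finset V).toList.permutations.map f).sum) /
    (Nat.factorial (Fintype.card V))

/-- p_{uv}: the probability that the pair {u,v} is compared directly. -/
noncomputable def pPair [Fintype V] (h : V → V → Bool) (u v : V) : ℝ :=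
  qsExp (fun l => if ({u, v} : Finset V) ∈ directPairs h l then 1 else 0)

/-- p_{uvw}: the probability that u, v, w are in the same recursive call when
one of them is first chosen as pivot. -/
noncomputable def pTriple [Fintype V] (h : V → V → Bool) (u v w : V) : ℝ :=
  qsExp (fun l => if ({u, v, w} : Finset V) ∈ pivotTriples h l then 1 else 0)

/-- The {0,1}-valued preference function as a real number. -/
def hr (h : V → V → Bool) (a b : V) : ℝ := if h a b then 1 else 0

/-- Indicator that `u` is ranked before `v` in the output list. -/
def rankBefore (l : List V) (u v : V) : ℝ := if l.idxOf u < l.idxOf v then 1 else 0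

set_option linter.unusedSectionVars false

namespace ACNaux

lemma sum_map_perm {α : Type*} {l₁ l₂ : List α} (p : l₁.Perm l₂) (f : α → ℝ) :
    (l₁.map f).sum = (l₂.map f).sum := (p.map f).sum_eq

lemma sum_map_filter {α : Type*} (p : α → Bool) (f : α → ℝ) (l : List α) :
    ((l.filter p).map f).sum = (l.map (fun a => if p a then f a else 0)).sum := by
  induction l with
  | nil => simp
  | cons x xs ih =>
      by_cases hx : p x <;> simp [List.filter_cons, hx, ih]

lemma sum_map_split {α : Type*} (p : α → Bool) (A B : α → ℝ) (l : List α) :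
    (l.map (fun a => if p a then A a else B a)).sum
      = ((l.filter p).map A).sum + ((l.filter (fun a => !p a)).map B).sum := by
  induction l with
  | nil => simp
  | cons x xs ih =>
      by_cases hx : p x <;> simp [List.filter_cons, hx, ih] <;> ring

lemma sum_map_erase {f : V → ℝ} {t : List V} (ht : t.Nodup) (x : V) :
    ((t.erase x).map f).sum = (t.map (fun y => if y = x then 0 else f y)).sum := by
  rw [ht.erase_eq_filter, sum_map_filter]
  refine congrArg _ (List.map_congr_left fun a _ => ?_)
  by_cases hax : a = x <;> simp [hax]

lemma sum_map_const {α : Type*} (l : List α) (r : ℝ) :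
    (l.map (fun _ => r)).sum = l.length * r := by
  induction l with
  | nil => simp
  | cons x xs ih => simp [ih]; ring

lemma list_sum_nonneg {α : Type*} {f : α → ℝ} {l : List α} (h : ∀ a ∈ l, 0 ≤ f a) :
    0 ≤ (l.map f).sum := by
  apply List.sum_nonneg; intro x hx
  rcases List.mem_map.mp hx with ⟨a, ha, rfl⟩; exact h a ha

lemma list_sum_nonpos {α : Type*} {f : α → ℝ} {l : List α} (h : ∀ a ∈ l, f a ≤ 0) :
    (l.map f).sum ≤ 0 := by
  have := List.sum_le_sum (g := fun _ => (0:ℝ)) h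
  simpa [sum_map_const] using this

lemma sum_comm' {α β : Type*} (s : List α) (t : List β) (F : α → β → ℝ) :
    (s.map (fun x => (t.map (fun y => F x y)).sum)).sum
      = (t.map (fun y => (s.map (fun x => F x y)).sum)).sum := by
  induction s with
  | nil => simp
  | cons a s ih =>
      simp only [List.map_cons, List.sum_cons, ih, List.sum_map_add]


/-- sum over ordered pairs (earlier, later) in the list -/
def pairSum (g : V → V → ℝ) : List V → ℝ
  | [] => 0
  | x :: xs => (xs.map (g x)).sum + pairSum g xs

@[simp] lemma pairSum_nil (g : V → V → ℝ) : pairSum g ([] : List V) = 0 := rfl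

lemma pairSum_cons (g : V → V → ℝ) (x : V) (xs : List V) :
    pairSum g (x :: xs) = (xs.map (g x)).sum + pairSum g xs := rfl

lemma pairSum_append (g : V → V → ℝ) (A B : List V) :
    pairSum g (A ++ B) = pairSum g A + pairSum g B
      + (A.map (fun a => (B.map (g a)).sum)).sum := by
  induction A with
  | nil => simp [pairSum]
  | cons x xs ih => simp [pairSum_cons, ih]; ring

lemma pairSum_perm {g : V → V → ℝ} (hg : ∀ x y, g x y = g y x)
    {l₁ l₂ : List V} (p : l₁.Perm l₂) : pairSum g l₁ = pairSum g l₂ := by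
  induction p with
  | nil => rfl
  | cons x p ih => simp [pairSum_cons, ih, sum_map_perm p]
  | swap x y l => simp [pairSum_cons, hg y x]; ring
  | trans p q ih1 ih2 => exact ih1.trans ih2

theorem qsort_perm (h : V → V → Bool) : ∀ l : List V, (qsort h l).Perm l
  | [] => by simp [qsort]
  | x :: xs => by
      rw [qsort]
      have h1 := qsort_perm h (xs.filter (fun y => h y x))
      have h2 := qsort_perm h (xs.filter (fun y => !(h y x)))
      have step1 : (qsort h (xs.filter (fun y => h y x)) ++
              x :: qsort h (xs.filter (fun y => !(h y x)))).Perm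
            (xs.filter (fun y => h y x) ++ x :: xs.filter (fun y => !(h y x))) :=
              h1.append (h2.cons x)
      have step2 : (xs.filter (fun y => h y x) ++ x :: xs.filter (fun y => !(h y x))).Perm
            (x :: (xs.filter (fun y => h y x) ++ xs.filter (fun y => !(h y x)))) :=
              List.perm_middle
      exact step1.trans (step2.trans ((List.filter_append_perm _ xs).cons x))
  termination_by l => l.length
  decreasing_by
    · simp only [List.length_cons]; exact Nat.lt_succ_of_le (List.length_filter_le _ _)
    · simp only [List.length_cons]; exact Nat.lt_succ_of_le (List.length_filter_le _ _)

lemma sum_flatMap_eq {α β : Type*} (l : List α) (g : α → List β) (F : β → ℝ) :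
    ((l.flatMap g).map F).sum = (l.map (fun x => ((g x).map F).sum)).sum := by
  induction l with
  | nil => simp
  | cons a s ih => simp [ih, List.sum_append]

/-- head decomposition of the permutations of a nonempty nodup list -/
lemma perms_head_decomp {t : List V} (ht : t.Nodup) (hne : t ≠ []) :
    t.permutations.Perm (t.flatMap (fun x => (t.erase x).permutations.map (x :: ·))) := by
  rw [List.perm_ext_iff_of_nodup (List.nodup_permutations t ht)]
  · intro l
    rw [List.mem_permutations, List.mem_flatMap]
    constructor
    · intro hl
      match l, hl with
      | [], hl => exact absurd hl.symm.eq_nil hne -- l ~ t with l = [] gives t = []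
      | y :: ys, hl =>
          have hy : y ∈ t := hl.subset (by simp)
          refine ⟨y, hy, ?_⟩
          rw [List.mem_map]
          refine ⟨ys, ?_, rfl⟩
          rw [List.mem_permutations]
          exact ((hl.trans (List.perm_cons_erase hy)).cons_inv)
    · rintro ⟨x, hx, hl⟩
      rw [List.mem_map] at hl
      obtain ⟨ys, hys, rfl⟩ := hl
      rw [List.mem_permutations] at hys
      exact (hys.cons x).trans (List.perm_cons_erase hx).symm
  · rw [List.nodup_flatMap]
    constructor
    · intro x _
      exact (List.nodup_permutations _ (ht.erase x)).map (fun a b hab => by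
        simpa using hab)
    · refine ht.imp ?_
      intro a b hab
      intro l hla hlb
      simp only [Function.onFun, List.mem_map] at hla hlb
      obtain ⟨ys, _, rfl⟩ := hla
      obtain ⟨zs, _, h2⟩ := hlb
      injection h2 with hba _
      exact hab hba.symm

lemma head_decomp {t : List V} (ht : t.Nodup) (hne : t ≠ []) (F : List V → ℝ) :
    (t.permutations.map F).sum
      = (t.map (fun x => (((t.erase x).permutations).map (fun xs => F (x :: xs))).sum)).sum := by
  rw [sum_map_perm (perms_head_decomp ht hne) F, sum_flatMap_eq]
  refine congrArg _ (List.map_congr_left fun x _ => ?_)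
  rw [List.map_map]
  rfl


lemma erase_filter_comm (P : V → Bool) {t : List V} (ht : t.Nodup) (x : V) :
    (t.erase x).filter P = (t.filter P).erase x := by
  rw [ht.erase_eq_filter, (ht.filter P).erase_eq_filter, List.filter_filter,
    List.filter_filter]
  exact List.filter_congr (fun a _ => by rw [Bool.and_comm])

lemma filt (P : V → Bool) : ∀ (t : List V), t.Nodup → ∀ G : List V → ℝ,
    (((t.filter P).length).factorial : ℝ) *
        ((t.permutations.map (fun l => G (l.filter P))).sum)
      = ((t.length).factorial : ℝ) * (((t.filter P).permutations.map G).sum) := by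
  suffices H : ∀ (n : ℕ) (t : List V), t.length ≤ n → t.Nodup → ∀ G : List V → ℝ,
      (((t.filter P).length).factorial : ℝ) *
          ((t.permutations.map (fun l => G (l.filter P))).sum)
        = ((t.length).factorial : ℝ) * (((t.filter P).permutations.map G).sum) by
    intro t; exact H t.length t le_rfl
  intro n
  induction n with
  | zero =>
      intro t hlen _ G
      rw [List.length_eq_zero_iff.mp (Nat.le_zero.mp hlen)]
      simp
  | succ n ihn =>
      rintro (_ | ⟨a, s⟩) hlen ht G
      · simp
      set t : List V := a :: s with hts
      have hne : t ≠ [] := by simp [hts]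
      have hmlen : s.length + 1 = t.length := by simp [hts]
      -- abbreviations
      set m : ℕ := t.length with hm
      set k : ℕ := (t.filter P).length with hk
      set W : ℝ := ((t.filter P).permutations.map G).sum with hW
      have herlen : ∀ x ∈ t, (t.erase x).length = s.length := by
        intro x hx
        have := List.length_erase_of_mem hx
        omega
      -- rewrite by head decomposition
      rw [head_decomp ht hne (fun l => G (l.filter P))]
      -- the inner sums as if-then-else
      have hsplit : (t.map (fun x =>
            (((t.erase x).permutations).map (fun xs => G ((x :: xs).filter P))).sum)).sum
          = ((t.filter P).map (fun x =>
                (((t.erase x).permutations).map (fun xs => G (x :: xs.filter P))).sum)).sum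
            + ((t.filter (fun x => !P x)).map (fun x =>
                (((t.erase x).permutations).map (fun xs => G (xs.filter P))).sum)).sum := by
        rw [← sum_map_split]
        refine congrArg _ (List.map_congr_left fun x _ => ?_)
        by_cases hPx : P x <;>
          simp only [hPx, if_true, if_false, Bool.false_eq_true] <;>
          exact congrArg _ (List.map_congr_left fun xs _ => by
            simp [List.filter_cons, hPx])
      rw [hsplit, mul_add, ← List.sum_map_mul_left, ← List.sum_map_mul_left]
      -- branch computations
      have hbranch1 : ∀ x ∈ t.filter P,
          (k.factorial : ℝ) *
              (((t.erase x).permutations).map (fun xs => G (x :: xs.filter P))).sum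
            = (k : ℝ) * (s.length.factorial : ℝ) *
                ((((t.filter P).erase x).permutations).map (fun ys => G (x :: ys))).sum := by
        intro x hx
        have hxt : x ∈ t := List.mem_of_mem_filter hx
        have hIH := ihn (t.erase x) (by rw [herlen x hxt]; omega) (ht.erase x)
          (fun z => G (x :: z))
        rw [erase_filter_comm P ht x] at hIH
        have hk1 : ((t.filter P).erase x).length + 1 = k := by
          have := List.length_erase_of_mem hx
          have : 0 < k := List.length_pos_iff.mpr (List.ne_nil_of_mem hx)
          omega
        rw [herlen x hxt] at hIH
        have : (k.factorial : ℝ) = (k : ℝ) * (((t.filter P).erase x).length).factorial := by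
          rw [← hk1, Nat.factorial_succ]
          push_cast
          ring
        rw [this, mul_assoc, hIH]
        ring
      have hbranch2 : ∀ x ∈ t.filter (fun x => !P x),
          (k.factorial : ℝ) *
              (((t.erase x).permutations).map (fun xs => G (xs.filter P))).sum
            = (s.length.factorial : ℝ) * W := by
        intro x hx
        have hxt : x ∈ t := List.mem_of_mem_filter hx
        have hPx : P x = false := by
          have := List.of_mem_filter hx
          simpa using this
        have hIH := ihn (t.erase x) (by rw [herlen x hxt]; omega) (ht.erase x) G
        rw [erase_filter_comm P ht x] at hIH
        have hxnot : x ∉ t.filter P := by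
          intro hmem
          have := List.of_mem_filter hmem
          rw [hPx] at this
          exact Bool.false_ne_true this
        rw [List.erase_of_not_mem hxnot] at hIH
        rw [herlen x hxt] at hIH
        exact hIH
      rw [List.map_congr_left hbranch1, List.map_congr_left hbranch2]
      -- now sum the constant branch 2 and identify branch 1 with head decomp of filter
      rw [sum_map_const]
      have hcount : ((t.filter (fun x => !P x)).length : ℝ) + (k : ℝ) = (m : ℝ) := by
        have := (List.filter_append_perm P t).length_eq
        rw [List.length_append] at this
        have hnat : (t.filter (fun x => !P x)).length + k = m := by omega
        exact_mod_cast hnat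
      have hfirst : ((t.filter P).map (fun x =>
            (k : ℝ) * (s.length.factorial : ℝ) *
              ((((t.filter P).erase x).permutations).map (fun ys => G (x :: ys))).sum)).sum
          = (k : ℝ) * (s.length.factorial : ℝ) * W := by
        by_cases hkP : t.filter P = []
        · have hk0 : (k:ℝ) = 0 := by simp [hk, hkP]
          simp [hkP, hk0]
        · have := head_decomp (ht.filter P) hkP G
          rw [hW, this, ← List.sum_map_mul_left]
        -- done?
      rw [hfirst]
      have hmfac : (m.factorial : ℝ) = (m : ℝ) * (s.length.factorial : ℝ) := by
        rw [← hmlen, Nat.factorial_succ]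
        push_cast
        ring
      rw [hmfac, ← hcount]
      ring


section Main

variable (h : V → V → Bool) (c : V → V → ℝ)

def gB (u v : V) : ℝ := hr h u v * c u v + hr h v u * c v u

def LX (t : List V) (x : V) : List V := (t.erase x).filter (fun y => h y x)
def RX (t : List V) (x : V) : List V := (t.erase x).filter (fun y => !(h y x))

def XX (t : List V) (x : V) : ℝ :=
  ((LX h t x).map (fun a => ((RX h t x).map (fun b => c a b)).sum)).sum
def TT (t : List V) (x : V) : ℝ :=
  ((LX h t x).map (fun a => ((RX h t x).map (fun b => gB h c a b)).sum)).sum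
def PP (t : List V) (x : V) : ℝ := ((LX h t x ++ RX h t x).map (gB h c x)).sum
def CC (t : List V) (x : V) : ℝ :=
  ((RX h t x).map (fun b => c x b)).sum + ((LX h t x).map (fun a => c a x)).sum
    + XX h c t x

lemma gB_symm (u v : V) : gB h c u v = gB h c v u := add_comm _ _

lemma gB_nonneg (hc : ∀ u v, 0 ≤ c u v) (u v : V) : 0 ≤ gB h c u v := by
  unfold gB hr
  have := hc u v
  have := hc v u
  split_ifs <;> linarith

/-- the one-step decomposition of the loss of quicksort output -/
lemma step1 {t : List V} (ht : t.Nodup) {x : V} (hx : x ∈ t) {xs : List V}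
    (hxs : xs.Perm (t.erase x)) :
    pairSum c (qsort h (x :: xs))
      = pairSum c (qsort h (xs.filter (fun y => h y x)))
        + pairSum c (qsort h (xs.filter (fun y => !(h y x)))) + CC h c t x := by
  have pA : (qsort h (xs.filter (fun y => h y x))).Perm (LX h t x) :=
    (qsort_perm h _).trans (hxs.filter _)
  have pB : (qsort h (xs.filter (fun y => !(h y x)))).Perm (RX h t x) :=
    (qsort_perm h _).trans (hxs.filter _)
  rw [qsort, pairSum_append, pairSum_cons]
  have hcross : ((qsort h (xs.filter (fun y => h y x))).map
        (fun a => ((x :: qsort h (xs.filter (fun y => !(h y x)))).map (c a)).sum)).sum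
      = ((LX h t x).map (fun a => c a x + ((RX h t x).map (c a)).sum)).sum := by
    rw [sum_map_perm pA]
    refine congrArg _ (List.map_congr_left fun a _ => ?_)
    simp only [List.map_cons, List.sum_cons]
    rw [sum_map_perm pB]
  have hmid : ((qsort h (xs.filter (fun y => !(h y x)))).map (c x)).sum
      = ((RX h t x).map (fun b => c x b)).sum := sum_map_perm pB _
  rw [hcross, hmid, List.sum_map_add]
  unfold CC XX
  ring

lemma idenC {t : List V} (ht : t.Nodup) {x : V} (hx : x ∈ t)
    (htour : ∀ a b : V, a ≠ b → h a b = !h b a) :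
    CC h c t x = PP h c t x + XX h c t x := by
  unfold CC PP
  rw [List.map_append, List.sum_append]
  have hL : ((LX h t x).map (gB h c x)).sum = ((LX h t x).map (fun a => c a x)).sum := by
    refine congrArg _ (List.map_congr_left fun a ha => ?_)
    unfold LX at ha
    rw [List.mem_filter] at ha
    have hax : a ≠ x := (ht.mem_erase_iff.mp ha.1).1
    have h1 : h x a = false := by
      rw [htour x a hax.symm, ha.2]
      rfl
    simp [gB, hr, h1, ha.2]
  have hR : ((RX h t x).map (gB h c x)).sum = ((RX h t x).map (fun b => c x b)).sum := by
    refine congrArg _ (List.map_congr_left fun b hb => ?_)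
    unfold RX at hb
    rw [List.mem_filter] at hb
    have hbx : b ≠ x := (ht.mem_erase_iff.mp hb.1).1
    have h2 : h b x = false := by simpa using hb.2
    have h1 : h x b = true := by
      rw [htour x b hbx.symm, h2]
      rfl
    simp [gB, hr, h1, h2]
  rw [hL, hR]
  ring

lemma idenB {t : List V} (ht : t.Nodup) {x : V} (hx : x ∈ t) :
    pairSum (gB h c) t
      = PP h c t x + TT h c t x + pairSum (gB h c) (LX h t x)
        + pairSum (gB h c) (RX h t x) := by
  have p1 : t.Perm (x :: (LX h t x ++ RX h t x)) :=
    (List.perm_cons_erase hx).trans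
      (((List.filter_append_perm _ (t.erase x)).symm).cons x)
  rw [pairSum_perm (gB_symm h c) p1, pairSum_cons, pairSum_append]
  unfold PP TT
  ring

end Main


lemma sum_map_sub {α : Type*} (l : List α) (f g : α → ℝ) :
    (l.map (fun a => f a - g a)).sum = (l.map f).sum - (l.map g).sum := by
  induction l with
  | nil => simp
  | cons x xs ih => simp [ih]; ring

section Triple

variable (h : V → V → Bool) (c : V → V → ℝ)

def PHI (D : V → V → ℝ) (x a b : V) : ℝ :=
  if a = x then 0 else
    if h a x then (if b = x then 0 else if h b x then 0 else D a b) else 0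

def DT (x a b : V) : ℝ := PHI h c x a b - 2 * PHI h (gB h c) x a b

lemma stepA (D : V → V → ℝ) {t : List V} (ht : t.Nodup) (x : V) :
    ((LX h t x).map (fun a => ((RX h t x).map (fun b => D a b)).sum)).sum
      = (t.map (fun a => (t.map (fun b => PHI h D x a b)).sum)).sum := by
  unfold LX RX
  rw [sum_map_filter, sum_map_erase ht]
  refine congrArg _ (List.map_congr_left fun a _ => ?_)
  by_cases hax : a = x
  · simp [hax, PHI]
  · by_cases hpa : h a x
    · simp only [PHI, hax, if_false, hpa, if_true]
      rw [sum_map_filter, sum_map_erase ht]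
      refine congrArg _ (List.map_congr_left fun b _ => ?_)
      by_cases hbx : b = x
      · simp [hbx]
      · simp only [hbx, if_false]
        by_cases hqb : h b x <;> simp [hqb]
    · simp [PHI, hax, hpa]

lemma XT_eq {t : List V} (ht : t.Nodup) (x : V) :
    XX h c t x - 2 * TT h c t x
      = (t.map (fun a => (t.map (fun b => DT h c x a b)).sum)).sum := by
  unfold XX TT
  rw [stepA h c ht x, stepA h (gB h c) ht x]
  rw [← List.sum_map_mul_left, ← sum_map_sub]
  refine congrArg _ (List.map_congr_left fun a _ => ?_)
  rw [← List.sum_map_mul_left, ← sum_map_sub]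
  rfl

def S3 (t : List V) (F : V → V → V → ℝ) : ℝ :=
  (t.map (fun x => (t.map (fun a => (t.map (fun b => F x a b)).sum)).sum)).sum

lemma S3_add (t : List V) (F G : V → V → V → ℝ) :
    S3 t (fun x a b => F x a b + G x a b) = S3 t F + S3 t G := by
  unfold S3
  simp only [List.sum_map_add]

lemma S3_nonpos {t : List V} {F : V → V → V → ℝ} (hF : ∀ x a b, F x a b ≤ 0) :
    S3 t F ≤ 0 := by
  unfold S3
  refine list_sum_nonpos fun x _ => list_sum_nonpos fun a _ => list_sum_nonpos fun b _ => hF x a b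

lemma S3_swap12 (t : List V) (F : V → V → V → ℝ) :
    S3 t F = S3 t (fun x a b => F a x b) :=
  sum_comm' t t (fun x a => (t.map (fun b => F x a b)).sum)

lemma S3_swap23 (t : List V) (F : V → V → V → ℝ) :
    S3 t F = S3 t (fun x a b => F x b a) := by
  unfold S3
  exact congrArg _ (List.map_congr_left fun x _ => sum_comm' t t (fun a b => F x a b))

end Triple


section Point

variable (h : V → V → Bool) (c : V → V → ℝ)

lemma Dzero (x a b : V) (hd : a = x ∨ b = x ∨ a = b) : DT h c x a b = 0 := by
  unfold DT PHI
  rcases hd with rfl | rfl | rfl <;> split_ifs <;> simp_all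

lemma point (htour : ∀ a b : V, a ≠ b → h a b = !h b a)
    (hc : ∀ u v, 0 ≤ c u v)
    (hcyc : ∀ a b x : V, a ≠ b → b ≠ x → a ≠ x →
      c a b + c b x + c x a ≤ 2 * (c b a + c x b + c a x))
    (x a b : V) :
    DT h c x a b + DT h c x b a + DT h c a x b + DT h c a b x
      + DT h c b x a + DT h c b a x ≤ 0 := by
  by_cases hxa : a = x
  · subst hxa
    rw [Dzero h c a a b (Or.inl rfl), Dzero h c a b a (Or.inr (Or.inl rfl)),
      Dzero h c b a a (Or.inr (Or.inr rfl))]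
    norm_num
  · by_cases hxb : b = x
    · subst hxb
      rw [Dzero h c b a b (Or.inr (Or.inl rfl)), Dzero h c b b a (Or.inl rfl),
        Dzero h c a b b (Or.inr (Or.inr rfl))]
      norm_num
    · by_cases hab : a = b
      · subst hab
        rw [Dzero h c x a a (Or.inr (Or.inr rfl)), Dzero h c a x a (Or.inr (Or.inl rfl)),
          Dzero h c a a x (Or.inl rfl)]
        norm_num
      · have h1 : h x a = !h a x := htour x a (Ne.symm hxa)
        have h2 : h x b = !h b x := htour x b (Ne.symm hxb)
        have h3 : h b a = !h a b := htour b a (Ne.symm hab)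
        have hba : ¬ (b = a) := fun e => hab e.symm
        have hax2 : ¬ (x = a) := fun e => hxa e.symm
        have hbx2 : ¬ (x = b) := fun e => hxb e.symm
        cases hp : h a x <;> cases hq : h b x <;> cases hrr : h a b <;>
          rw [hp] at h1 <;> rw [hq] at h2 <;> rw [hrr] at h3 <;>
          simp only [DT, PHI, gB, hr, hp, hq, hrr, h1, h2, h3, hxa, hxb, hab, hba,
            hax2, hbx2, Bool.not_true, Bool.not_false, if_true, if_false,
            Bool.false_eq_true, Bool.true_eq_false, ite_true, ite_false] <;>
          nlinarith [hc a b, hc b a, hc a x, hc x a, hc b x, hc x b,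
            hcyc a b x hab hxb hxa, hcyc b a x hba hxa hxb]

end Point


section Assemble

variable (h : V → V → Bool) (c : V → V → ℝ)

lemma triple_sum_nonpos (htour : ∀ a b : V, a ≠ b → h a b = !h b a)
    (hc : ∀ u v, 0 ≤ c u v)
    (hcyc : ∀ a b x : V, a ≠ b → b ≠ x → a ≠ x →
      c a b + c b x + c x a ≤ 2 * (c b a + c x b + c a x))
    {t : List V} (ht : t.Nodup) :
    (t.map (fun x => XX h c t x - 2 * TT h c t x)).sum ≤ 0 := by
  set D := DT h c with hD
  have e : (t.map (fun x => XX h c t x - 2 * TT h c t x)).sum = S3 t D := by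
    unfold S3
    exact congrArg _ (List.map_congr_left (fun x _ => XT_eq h c ht x))
  rw [e]
  have e0 : S3 t (fun x a b => D x a b) = S3 t D := rfl
  have e1 : S3 t (fun x a b => D a x b) = S3 t D := (S3_swap12 t D).symm
  have e2 : S3 t (fun x a b => D x b a) = S3 t D := (S3_swap23 t D).symm
  have e3 : S3 t (fun x a b => D a b x) = S3 t D := by
    have h' := S3_swap12 t (fun x a b => D x b a)
    exact h'.symm.trans (S3_swap23 t D).symm
  have e4 : S3 t (fun x a b => D b x a) = S3 t D := by
    have h' := S3_swap23 t (fun x a b => D a x b)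
    exact h'.symm.trans (S3_swap12 t D).symm
  have e5 : S3 t (fun x a b => D b a x) = S3 t D := by
    have h' := S3_swap12 t (fun x a b => D b x a)
    exact h'.symm.trans e4
  have A5 : S3 t (fun x a b => D x a b + D x b a + D a x b + D a b x + D b x a + D b a x)
      = S3 t (fun x a b => D x a b + D x b a + D a x b + D a b x + D b x a)
        + S3 t (fun x a b => D b a x) := S3_add t _ _
  have A4 : S3 t (fun x a b => D x a b + D x b a + D a x b + D a b x + D b x a)
      = S3 t (fun x a b => D x a b + D x b a + D a x b + D a b x)
        + S3 t (fun x a b => D b x a) := S3_add t _ _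
  have A3 : S3 t (fun x a b => D x a b + D x b a + D a x b + D a b x)
      = S3 t (fun x a b => D x a b + D x b a + D a x b)
        + S3 t (fun x a b => D a b x) := S3_add t _ _
  have A2 : S3 t (fun x a b => D x a b + D x b a + D a x b)
      = S3 t (fun x a b => D x a b + D x b a) + S3 t (fun x a b => D a x b) := S3_add t _ _
  have A1 : S3 t (fun x a b => D x a b + D x b a)
      = S3 t (fun x a b => D x a b) + S3 t (fun x a b => D x b a) := S3_add t _ _
  have hnp : S3 t (fun x a b => D x a b + D x b a + D a x b + D a b x + D b x a + D b a x) ≤ 0 :=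
    S3_nonpos (fun x a b => point h c htour hc hcyc x a b)
  linarith

theorem main_bound (htour : ∀ a b : V, a ≠ b → h a b = !h b a)
    (hc : ∀ u v, 0 ≤ c u v)
    (hcyc : ∀ a b x : V, a ≠ b → b ≠ x → a ≠ x →
      c a b + c b x + c x a ≤ 2 * (c b a + c x b + c a x)) :
    ∀ t : List V, t.Nodup →
      ((t.permutations.map (fun l => pairSum c (qsort h l))).sum)
        ≤ 2 * ((t.length).factorial : ℝ) * pairSum (gB h c) t := by
  suffices H : ∀ (n : ℕ) (t : List V), t.length ≤ n → t.Nodup →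
      ((t.permutations.map (fun l => pairSum c (qsort h l))).sum)
        ≤ 2 * ((t.length).factorial : ℝ) * pairSum (gB h c) t by
    intro t ht; exact H t.length t le_rfl ht
  intro n
  induction n with
  | zero =>
      intro t hlen _
      rw [List.length_eq_zero_iff.mp (Nat.le_zero.mp hlen)]
      simp [qsort, pairSum]
  | succ n ihn =>
      rintro (_ | ⟨a, s⟩) hlen ht
      · simp [qsort, pairSum]
      set t : List V := a :: s with hts
      have hne : t ≠ [] := by simp [hts]
      have hsl : s.length + 1 = t.length := by simp [hts]
      have herlen : ∀ x ∈ t, (t.erase x).length = s.length := by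
        intro x hx
        have := List.length_erase_of_mem hx
        omega
      rw [head_decomp ht hne]
      set smf : ℝ := (s.length.factorial : ℝ) with hsmf
      have hsmfpos : (0:ℝ) < smf := by
        rw [hsmf]; exact_mod_cast Nat.factorial_pos _
      -- rewrite the inner sums using the one-step decomposition
      have hinner : ∀ x ∈ t,
          (((t.erase x).permutations).map (fun xs => pairSum c (qsort h (x :: xs)))).sum
            = (((t.erase x).permutations).map
                (fun xs => pairSum c (qsort h (xs.filter (fun y => h y x))))).sum
              + (((t.erase x).permutations).map
                (fun xs => pairSum c (qsort h (xs.filter (fun y => !(h y x)))))).sum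
              + smf * CC h c t x := by
        intro x hx
        have e1 : ∀ xs ∈ (t.erase x).permutations,
            pairSum c (qsort h (x :: xs))
              = pairSum c (qsort h (xs.filter (fun y => h y x)))
                + pairSum c (qsort h (xs.filter (fun y => !(h y x)))) + CC h c t x := by
          intro xs hxs
          exact step1 h c ht hx (List.mem_permutations.mp hxs)
        rw [List.map_congr_left e1, List.sum_map_add, List.sum_map_add, sum_map_const,
          List.length_permutations, herlen x hx]
      rw [List.map_congr_left hinner]
      -- per-pivot bounds via filt and the induction hypothesis
      have hbound : ∀ P : V → Bool, ∀ x ∈ t,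
          (((t.erase x).permutations).map
              (fun xs => pairSum c (qsort h (xs.filter P)))).sum
            ≤ 2 * smf * pairSum (gB h c) ((t.erase x).filter P) := by
        intro P x hx
        have hf := filt P (t.erase x) (ht.erase x) (fun z => pairSum c (qsort h z))
        rw [herlen x hx] at hf
        have hih := ihn ((t.erase x).filter P)
          (by
            have h1 := List.length_filter_le P (t.erase x)
            have h2 := herlen x hx
            omega)
          ((ht.erase x).filter P)
        set kf : ℝ := ((((t.erase x).filter P).length).factorial : ℝ) with hkf
        have hkfpos : (0:ℝ) < kf := by
          rw [hkf]; exact_mod_cast Nat.factorial_pos _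
        have step : kf * (((t.erase x).permutations).map
              (fun xs => pairSum c (qsort h (xs.filter P)))).sum
            ≤ kf * (2 * smf * pairSum (gB h c) ((t.erase x).filter P)) := by
          rw [hf]
          calc smf * ((((t.erase x).filter P).permutations).map
                  (fun z => pairSum c (qsort h z))).sum
              ≤ smf * (2 * kf * pairSum (gB h c) ((t.erase x).filter P)) := by
                apply mul_le_mul_of_nonneg_left _ (le_of_lt hsmfpos)
                exact hih
            _ = kf * (2 * smf * pairSum (gB h c) ((t.erase x).filter P)) := by ring
        exact le_of_mul_le_mul_left step hkfpos
      -- pointwise bound for the pivot sums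
      have hpoint : ∀ x ∈ t,
          (((t.erase x).permutations).map
              (fun xs => pairSum c (qsort h (xs.filter (fun y => h y x))))).sum
            + (((t.erase x).permutations).map
              (fun xs => pairSum c (qsort h (xs.filter (fun y => !(h y x)))))).sum
            + smf * CC h c t x
          ≤ smf * (CC h c t x + 2 * pairSum (gB h c) (LX h t x)
              + 2 * pairSum (gB h c) (RX h t x)) := by
        intro x hx
        have b1 := hbound (fun y => h y x) x hx
        have b2 := hbound (fun y => !(h y x)) x hx
        have l1 : pairSum (gB h c) ((t.erase x).filter (fun y => h y x))
            = pairSum (gB h c) (LX h t x) := rfl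
        have l2 : pairSum (gB h c) ((t.erase x).filter (fun y => !(h y x)))
            = pairSum (gB h c) (RX h t x) := rfl
        rw [l1] at b1
        rw [l2] at b2
        linarith
      refine le_trans (List.sum_le_sum hpoint) ?_
      -- final algebra
      have hpt : ∀ x ∈ t,
          smf * (CC h c t x + 2 * pairSum (gB h c) (LX h t x)
              + 2 * pairSum (gB h c) (RX h t x))
            = smf * (2 * pairSum (gB h c) t)
              - smf * (PP h c t x + (2 * TT h c t x - XX h c t x)) := by
        intro x hx
        have hB := idenB h c ht hx
        have hC := idenC h c ht hx htour
        nlinarith [hB, hC]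
      rw [List.map_congr_left hpt, sum_map_sub, sum_map_const, List.sum_map_mul_left]
      have hPPsum : 0 ≤ (t.map (fun x => PP h c t x)).sum := by
        refine list_sum_nonneg fun x _ => ?_
        exact list_sum_nonneg fun y _ => gB_nonneg h c hc _ _
      have htriple := triple_sum_nonpos h c htour hc hcyc ht
      have hsplitg : (t.map (fun x => PP h c t x + (2 * TT h c t x - XX h c t x))).sum
          = (t.map (fun x => PP h c t x)).sum
            - (t.map (fun x => XX h c t x - 2 * TT h c t x)).sum := by
        rw [← sum_map_sub]
        refine congrArg _ (List.map_congr_left fun x _ => ?_)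
        ring
      rw [hsplitg]
      have hfac : 2 * ((t.length).factorial : ℝ) = (t.length : ℝ) * (smf * 2) := by
        rw [← hsl, Nat.factorial_succ, hsmf]
        push_cast
        ring
      rw [hfac]
      nlinarith [hPPsum, htriple, hsmfpos]

end Assemble


section Interface

variable [Fintype V]

lemma pairSum_eq_finset (D : V → V → ℝ) :
    ∀ {o : List V}, o.Nodup →
      pairSum D o = ∑ p ∈ (Finset.univ : Finset (V × V)),
        (if p.1 ∈ o ∧ p.2 ∈ o ∧ o.idxOf p.1 < o.idxOf p.2 then D p.1 p.2 else 0) := by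
  intro o
  induction o with
  | nil => intro _; simp [pairSum]
  | cons x xs ih =>
      intro hnd
      have hx : x ∉ xs := (List.nodup_cons.mp hnd).1
      have hxs : xs.Nodup := (List.nodup_cons.mp hnd).2
      rw [pairSum_cons, ih hxs]
      have hpt : ∀ p : V × V,
          (if p.1 ∈ x :: xs ∧ p.2 ∈ x :: xs
              ∧ (x :: xs).idxOf p.1 < (x :: xs).idxOf p.2 then D p.1 p.2 else 0)
            = (if p.1 = x ∧ p.2 ∈ xs then D x p.2 else 0)
              + (if p.1 ∈ xs ∧ p.2 ∈ xs ∧ xs.idxOf p.1 < xs.idxOf p.2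
                  then D p.1 p.2 else 0) := by
        rintro ⟨u, v⟩
        dsimp only
        by_cases hu : u = x <;> by_cases hv : v = x
        · simp [hu, hv, hx]
        · have h2 : (x :: xs).idxOf v = (xs.idxOf v).succ :=
            List.idxOf_cons_ne xs (fun e => hv e.symm)
          by_cases hvm : v ∈ xs
          · simp [hu, hv, hvm, hx, h2, List.idxOf_cons_self]
          · simp [hu, hv, hvm, hx]
        · have h1 : (x :: xs).idxOf u = (xs.idxOf u).succ :=
            List.idxOf_cons_ne xs (fun e => hu e.symm)
          simp [hu, hv, hx, h1, List.idxOf_cons_self]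
        · have h1 : (x :: xs).idxOf u = (xs.idxOf u).succ :=
            List.idxOf_cons_ne xs (fun e => hu e.symm)
          have h2 : (x :: xs).idxOf v = (xs.idxOf v).succ :=
            List.idxOf_cons_ne xs (fun e => hv e.symm)
          simp [hu, hv, h1, h2, Nat.succ_lt_succ_iff]
      rw [Finset.sum_congr rfl (fun p _ => hpt p), Finset.sum_add_distrib]
      congr 1
      rw [Fintype.sum_prod_type]
      have hrow : ∀ u : V, (∑ v : V, if u = x ∧ v ∈ xs then D x v else 0)
          = if u = x then ((xs.map (D x)).sum) else 0 := by
        intro u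
        by_cases hu : u = x
        · simp only [hu, true_and, if_true]
          rw [← List.sum_toFinset _ hxs]
          rw [show (fun v => if v ∈ xs then D x v else 0)
              = (fun v => if v ∈ xs.toFinset then D x v else 0) from
            funext fun v => by simp [List.mem_toFinset]]
          rw [Finset.sum_ite_mem, Finset.univ_inter]
        · simp [hu]
      rw [Finset.sum_congr rfl (fun u _ => hrow u), Finset.sum_ite_eq' Finset.univ x]
      simp

lemma finset_loss (D : V → V → ℝ) {o : List V} (ho : o.Nodup) (hall : ∀ v : V, v ∈ o) :
    ∑ p ∈ (Finset.univ : Finset (V × V)).filter (fun p => p.1 ≠ p.2),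
        rankBefore o p.1 p.2 * D p.1 p.2 = pairSum D o := by
  rw [pairSum_eq_finset D ho, Finset.sum_filter]
  refine Finset.sum_congr rfl fun p _ => ?_
  rcases p with ⟨u, v⟩
  dsimp only [rankBefore]
  by_cases huv : u = v
  · simp [huv]
  · simp only [huv, Ne, not_false_iff, if_true, hall u, hall v, true_and]
    by_cases hlt : o.idxOf u < o.idxOf v <;> simp [hlt]

lemma hr_loss (h : V → V → Bool) (D : V → V → ℝ) {o : List V} (ho : o.Nodup)
    (hall : ∀ v : V, v ∈ o) :
    ∑ p ∈ (Finset.univ : Finset (V × V)).filter (fun p => p.1 ≠ p.2),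
        hr h p.1 p.2 * D p.1 p.2 = pairSum (gB h D) o := by
  rw [pairSum_eq_finset (gB h D) ho, Finset.sum_filter]
  have key : ∀ p : V × V,
      (if p.1 ≠ p.2 then hr h p.1 p.2 * D p.1 p.2 else 0)
        = (if o.idxOf p.1 < o.idxOf p.2 then hr h p.1 p.2 * D p.1 p.2 else 0)
          + (if o.idxOf p.2 < o.idxOf p.1 then hr h p.1 p.2 * D p.1 p.2 else 0) := by
    rintro ⟨u, v⟩
    dsimp only
    by_cases huv : u = v
    · simp [huv]
    · have hne : o.idxOf u ≠ o.idxOf v :=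
        fun e => huv ((List.idxOf_inj (hall u)).mp e)
      rcases Nat.lt_or_ge (o.idxOf u) (o.idxOf v) with hlt | hge
      · have h2 : ¬ o.idxOf v < o.idxOf u := by omega
        simp [huv, hlt, h2]
      · have hgt : o.idxOf v < o.idxOf u := by omega
        have h2 : ¬ o.idxOf u < o.idxOf v := by omega
        simp [huv, hgt, h2]
  rw [Finset.sum_congr rfl (fun p _ => key p), Finset.sum_add_distrib]
  have hswap : (∑ p : V × V,
        if o.idxOf p.2 < o.idxOf p.1 then hr h p.1 p.2 * D p.1 p.2 else 0)
      = ∑ p : V × V,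
        (if o.idxOf p.1 < o.idxOf p.2 then hr h p.2 p.1 * D p.2 p.1 else 0) :=
    Fintype.sum_equiv (Equiv.prodComm V V) _ _ (fun p => by rfl)
  rw [hswap, ← Finset.sum_add_distrib]
  refine Finset.sum_congr rfl fun p _ => ?_
  by_cases hlt : o.idxOf p.1 < o.idxOf p.2
  · simp only [hlt, if_true, hall p.1, hall p.2, true_and]
    unfold gB
    ring
  · simp [hlt]

end Interface


lemma cyc_core (ω : ℕ → ℕ → ℝ) (hωnn : ∀ i j, 0 ≤ ω i j)
    (hωsym : ∀ i j, ω i j = ω j i)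
    (hωmon : ∀ i j k, (i < j ∧ j < k) ∨ (k < j ∧ j < i) → ω i j ≤ ω i k)
    (hωtri : ∀ i j k, ω i j ≤ ω i k + ω k j)
    (i j k : ℕ) (hij : i ≠ j) (hjk : j ≠ k) (hik : i ≠ k) :
    (if j < i then (1:ℝ) else 0) * ω i j + (if k < j then (1:ℝ) else 0) * ω j k
        + (if i < k then (1:ℝ) else 0) * ω k i
      ≤ 2 * ((if i < j then (1:ℝ) else 0) * ω j i + (if j < k then (1:ℝ) else 0) * ω k j
        + (if k < i then (1:ℝ) else 0) * ω i k) := by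
  by_cases o1 : i < j <;> by_cases o2 : j < k <;> by_cases o3 : i < k
  · -- i < j < k
    have t1 := hωtri k i j
    split_ifs <;> first | (exfalso; omega) |
      nlinarith [hωnn j i, hωnn k j, t1, hωsym k i, hωsym i j, hωsym j k]
  · exfalso; omega
  · -- i < k < j
    have hkj : k < j := by omega
    have m1 : ω j k ≤ ω j i := hωmon j k i (Or.inr ⟨o3, hkj⟩)
    have m2 : ω i k ≤ ω i j := hωmon i k j (Or.inl ⟨o3, hkj⟩)
    split_ifs <;> first | (exfalso; omega) |
      nlinarith [m1, m2, hωsym k i, hωsym i k, hωsym i j, hωsym j i, hωnn j i]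
  · -- i < j, ¬j<k, ¬i<k : k < i < j
    have hki : k < i := by omega
    have t1 := hωtri j k i
    split_ifs <;> first | (exfalso; omega) |
      nlinarith [t1, hωnn j i, hωnn i k, hωsym j k, hωsym k j]
  · -- j < i, j < k, i < k : j < i < k
    have hji : j < i := by omega
    have m1 : ω j i ≤ ω j k := hωmon j i k (Or.inl ⟨hji, o3⟩)
    have m2 : ω k i ≤ ω k j := hωmon k i j (Or.inr ⟨hji, o3⟩)
    split_ifs <;> first | (exfalso; omega) |
      nlinarith [m1, m2, hωsym i j, hωsym j i, hωsym k j, hωnn k j]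
  · -- j < i, j < k, k < i : j < k < i
    have hji : j < i := by omega
    have hki : k < i := by omega
    have t1 := hωtri i j k
    split_ifs <;> first | (exfalso; omega) |
      nlinarith [t1, hωnn k j, hωnn i k, hωsym i j, hωsym j k, hωsym k j]
  · exfalso; omega
  · -- k < j < i
    have hkj : k < j := by omega
    have hji : j < i := by omega
    have m1 : ω i j ≤ ω i k := hωmon i j k (Or.inr ⟨hkj, hji⟩)
    have m2 : ω k j ≤ ω k i := hωmon k j i (Or.inl ⟨hkj, hji⟩)
    split_ifs <;> first | (exfalso; omega) |
      nlinarith [m1, m2, hωsym j k, hωsym k j, hωsym i k, hωsym k i, hωnn i k]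

end ACNaux

/-- the expected weighted misranking loss of QuickSort's output
against a ground-truth ranking σ* is at most twice the loss of the preference
function h itself. -/
theorem quicksort_loss_bound_general [Fintype V] {n : ℕ}
    (hn : Fintype.card V = n)
    (h : V → V → Bool) (htour : ∀ a b : V, a ≠ b → h a b = !h b a)
    (σs : V ≃ Fin n)
    (ω : ℕ → ℕ → ℝ) (hωnn : ∀ i j, 0 ≤ ω i j)
    (hωsym : ∀ i j, ω i j = ω j i)
    (hωmon : ∀ i j k, (i < j ∧ j < k) ∨ (k < j ∧ j < i) → ω i j ≤ ω i k)
    (hωtri : ∀ i j k, ω i j ≤ ω i k + ω k j) :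
    qsExp (fun l =>
        ((n.choose 2 : ℝ))⁻¹ *
          ∑ p ∈ (Finset.univ : Finset (V × V)).filter (fun p => p.1 ≠ p.2),
            rankBefore (qsort h l) p.1 p.2 *
              (if (σs p.2 : ℕ) < (σs p.1 : ℕ) then (1 : ℝ) else 0) *
              ω (σs p.1) (σs p.2))
      ≤ 2 * (((n.choose 2 : ℝ))⁻¹ *
          ∑ p ∈ (Finset.univ : Finset (V × V)).filter (fun p => p.1 ≠ p.2),
            hr h p.1 p.2 *
              (if (σs p.2 : ℕ) < (σs p.1 : ℕ) then (1 : ℝ) else 0) *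
              ω (σs p.1) (σs p.2)) := by
  classical
  set c : V → V → ℝ :=
    fun u v => (if (σs v : ℕ) < (σs u : ℕ) then (1:ℝ) else 0) * ω (σs u) (σs v) with hcdef
  have hc : ∀ u v, 0 ≤ c u v := by
    intro u v
    simp only [hcdef]
    split_ifs <;> simp [hωnn]
  have hinjval : ∀ {a b : V}, a ≠ b → ((σs a : ℕ) ≠ (σs b : ℕ)) := by
    intro a b hab e
    exact hab (σs.injective (Fin.val_injective e))
  have hcyc : ∀ a b x : V, a ≠ b → b ≠ x → a ≠ x →
      c a b + c b x + c x a ≤ 2 * (c b a + c x b + c a x) := by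
    intro a b x hab hbx hax
    simp only [hcdef]
    exact ACNaux.cyc_core ω hωnn hωsym hωmon hωtri (σs a) (σs b) (σs x)
      (hinjval hab) (hinjval hbx) (hinjval hax)
  unfold qsExp
  rw [hn]
  set t : List V := (Finset.univ : Finset V).toList with htdef
  have htn : t.Nodup := Finset.nodup_toList _
  have hlen : t.length = n := by
    rw [htdef, Finset.length_toList, Finset.card_univ, hn]
  have hmem : ∀ v : V, v ∈ t := by
    intro v
    rw [htdef]
    simp [Finset.mem_toList]
  have hfun : ∀ l ∈ t.permutations,
      (((n.choose 2 : ℝ))⁻¹ *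
          ∑ p ∈ (Finset.univ : Finset (V × V)).filter (fun p => p.1 ≠ p.2),
            rankBefore (qsort h l) p.1 p.2 *
              (if (σs p.2 : ℕ) < (σs p.1 : ℕ) then (1 : ℝ) else 0) *
              ω (σs p.1) (σs p.2))
        = ((n.choose 2 : ℝ))⁻¹ * ACNaux.pairSum c (qsort h l) := by
    intro l hl
    congr 1
    have hperm : (qsort h l).Perm t :=
      (ACNaux.qsort_perm h l).trans (List.mem_permutations.mp hl)
    have hnodup : (qsort h l).Nodup := (hperm.nodup_iff).mpr htn
    have hall : ∀ v : V, v ∈ qsort h l := fun v => hperm.mem_iff.mpr (hmem v)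
    rw [← ACNaux.finset_loss c hnodup hall]
    refine Finset.sum_congr rfl fun p _ => ?_
    simp only [hcdef]
    ring
  rw [List.map_congr_left hfun, List.sum_map_mul_left]
  have hmain := ACNaux.main_bound h c htour hc hcyc t htn
  rw [hlen] at hmain
  have hRHS : ∑ p ∈ (Finset.univ : Finset (V × V)).filter (fun p => p.1 ≠ p.2),
      hr h p.1 p.2 * (if (σs p.2 : ℕ) < (σs p.1 : ℕ) then (1 : ℝ) else 0) *
        ω (σs p.1) (σs p.2)
        = ACNaux.pairSum (ACNaux.gB h c) t := by
    rw [← ACNaux.hr_loss h c htn hmem]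
    refine Finset.sum_congr rfl fun p _ => ?_
    simp only [hcdef]
    ring
  rw [hRHS]
  have hchoosenn : (0:ℝ) ≤ ((n.choose 2 : ℝ))⁻¹ := by positivity
  have hfacpos : (0:ℝ) < (n.factorial : ℝ) := by exact_mod_cast Nat.factorial_pos n
  rw [div_le_iff₀ hfacpos]
  have hchain := mul_le_mul_of_nonneg_left hmain hchoosenn
  nlinarith [hchain]
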